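/- Let X be a locally compact regular topological space and f : X → X a continuous map. Then L̄(X^r) = closure(Λ(X)), i.e., the intersection of the closures of all right-absorbing open subsets of X equals the closure of the union of all omega-limit sets. -/
import Mathlib


open Set Topology

/-- The omega-limit set of a point `x` under the discrete semi-flow generated by `f`:
`Λ(x) = ⋂ₙ closure {f^[m] x : m ≥ n}`. -/
def Lambda {X : Type*} [TopologicalSpace X] (f : X → X) (x : X) : Set X :=
  ⋂ n : ℕ, closure ((fun m => f^[m] x) '' Set.Ici n)

/-- The omega-limit set of a subset `S`: `Λ(S) = ⋃_{x ∈ S} Λ(x)`. -/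
def LambdaSet {X : Type*} [TopologicalSpace X] (f : X → X) (S : Set X) : Set X :=
  ⋃ x ∈ S, Lambda f x

/-- The region of pseudo-attraction of `S`: `PA(S) = {x : Λ(x) ⊆ S}`. -/
def PA {X : Type*} [TopologicalSpace X] (f : X → X) (S : Set X) : Set X :=
  {x | Lambda f x ⊆ S}

/-- The region of weak-attraction of `S`: `WA(S) = {x : Λ(x) ∩ S ≠ ∅}`. -/
def WA {X : Type*} [TopologicalSpace X] (f : X → X) (S : Set X) : Set X :=
  {x | (Lambda f x ∩ S).Nonempty}

/-- The region of attraction of `S`: `A(S) = {x : ∅ ≠ Λ(x) ⊆ S}`. -/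
def RA {X : Type*} [TopologicalSpace X] (f : X → X) (S : Set X) : Set X :=
  {x | (Lambda f x).Nonempty ∧ Lambda f x ⊆ S}

/-- `X` is (positively) Lagrange stable at `x` if the closure of the trajectory of `x`
is compact. -/
def LagrangeStableAt {X : Type*} [TopologicalSpace X] (f : X → X) (x : X) : Prop :=
  IsCompact (closure (Set.range fun n : ℕ => f^[n] x))

/-- An externology on a topological space: a nonempty family of open sets closed under
finite intersections such that any open set containing a member belongs to the family. -/
def IsExternology {X : Type*} [TopologicalSpace X] (ε : Set (Set X)) : Prop :=
  ε.Nonempty ∧ (∀ E ∈ ε, IsOpen E) ∧ (∀ E ∈ ε, ∀ F ∈ ε, E ∩ F ∈ ε) ∧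
    (∀ E ∈ ε, ∀ U : Set X, IsOpen U → E ⊆ U → U ∈ ε)

/-- The limit space of an externology: `L(X) = ⋂_{E ∈ ε} E`. -/
def limitSpace {X : Type*} (ε : Set (Set X)) : Set X := ⋂ E ∈ ε, E

/-- The bar-limit space of an externology: `L̄(X) = ⋂_{E ∈ ε} closure E`. -/
def barLimit {X : Type*} [TopologicalSpace X] (ε : Set (Set X)) : Set X :=
  ⋂ E ∈ ε, closure E

/-- The region of pseudo-attraction of the externology:
`D(X) = {x : ∀ E ∈ ε, f^[m] x ∈ E for all large m}`. -/
def Dregion {X : Type*} (f : X → X) (ε : Set (Set X)) : Set X :=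
  {x | ∀ E ∈ ε, ∃ n : ℕ, ∀ m ≥ n, f^[m] x ∈ E}

/-- The region of pseudo-bar-attraction of the externology:
`D̄(X) = {x : ∀ E ∈ ε, f^[m] x ∈ closure E for all large m}`. -/
def Dbar {X : Type*} [TopologicalSpace X] (f : X → X) (ε : Set (Set X)) : Set X :=
  {x | ∀ E ∈ ε, ∃ n : ℕ, ∀ m ≥ n, f^[m] x ∈ closure E}

/-- A right-absorbing open subset: an open set that eventually contains the trajectory
of every point. -/
def RightAbsorbing {X : Type*} [TopologicalSpace X] (f : X → X) (E : Set X) : Prop :=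
  IsOpen E ∧ ∀ y : X, ∃ n : ℕ, ∀ m ≥ n, f^[m] y ∈ E

/-- A point `x` is periodic if `f^[n] x = x` for some `n ≥ 1`. -/
def IsPeriodicPoint {X : Type*} (f : X → X) (x : X) : Prop := ∃ n ≥ 1, f^[n] x = x

theorem stmt19 {X : Type*} [TopologicalSpace X] [LocallyCompactSpace X] [RegularSpace X]
    (f : X → X) (hf : Continuous f) :
    (⋂ E ∈ {E : Set X | RightAbsorbing f E}, closure E)
      = closure (LambdaSet f (Set.univ : Set X)) := by
  apply Set.Subset.antisymm
  · -- hard direction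
    intro x hx
    by_contra hxc
    -- choose a closed neighborhood C of x inside the complement of closure Λ
    have hUopen : IsOpen (closure (LambdaSet f (Set.univ : Set X)))ᶜ :=
      isClosed_closure.isOpen_compl
    have hUmem : (closure (LambdaSet f (Set.univ : Set X)))ᶜ ∈ 𝓝 x :=
      hUopen.mem_nhds hxc
    obtain ⟨C, ⟨hCmem, hCclosed⟩, hCsub⟩ := (closed_nhds_basis x).mem_iff.mp hUmem
    obtain ⟨K, hKcomp, hxK, hKsub⟩ :=
      exists_compact_subset isOpen_interior (mem_interior_iff_mem_nhds.mpr hCmem)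
    set K' : Set X := closure K with hK'
    have hK'comp : IsCompact K' := hKcomp.closure
    have hK'C : K' ⊆ C := closure_minimal (hKsub.trans interior_subset) hCclosed
    -- E := K'ᶜ is right-absorbing
    have hE : RightAbsorbing f K'ᶜ := by
      refine ⟨isClosed_closure.isOpen_compl, ?_⟩
      intro y
      by_contra hcon
      push_neg at hcon
      have hfreq : ∀ n : ℕ, ∃ m, n ≤ m ∧ f^[m] y ∈ K' := by
        intro n
        obtain ⟨m, hm, hmem⟩ := hcon n
        exact ⟨m, hm, not_not.mp hmem⟩
      set g : ℕ → X := fun m => f^[m] y with hg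
      set F : Filter X := Filter.map g Filter.atTop ⊓ Filter.principal K' with hF
      have hFle : F ≤ Filter.map g Filter.atTop := inf_le_left
      have hFne : F.NeBot := by
        rw [hF, Filter.inf_principal_neBot_iff]
        intro U hU
        rw [Filter.mem_map, Filter.mem_atTop_sets] at hU
        obtain ⟨n, hn⟩ := hU
        obtain ⟨m, hm, hmem⟩ := hfreq n
        exact ⟨g m, hn m hm, hmem⟩
      haveI := hFne
      obtain ⟨z, hzK', hz⟩ := hK'comp.exists_clusterPt (show F ≤ Filter.principal K' from inf_le_right)
      have hzL : z ∈ Lambda f y := by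
        rw [Lambda, Set.mem_iInter]
        intro n
        have hmem : g '' Set.Ici n ∈ Filter.map g Filter.atTop := by
          rw [Filter.mem_map]
          exact Filter.mem_atTop_sets.mpr ⟨n, fun m hm => Set.mem_image_of_mem g hm⟩
        have : ClusterPt z (Filter.principal (g '' Set.Ici n)) :=
          hz.mono (hFle.trans (Filter.le_principal_iff.mpr hmem))
        exact mem_closure_iff_clusterPt.mpr this
      have hzLS : z ∈ LambdaSet f (Set.univ : Set X) := by
        exact Set.mem_biUnion (Set.mem_univ y) hzL
      exact (hCsub (hK'C hzK')) (subset_closure hzLS)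
    have hxE : x ∈ closure K'ᶜ := by
      have := Set.mem_iInter₂.mp hx K'ᶜ hE
      exact this
    rw [closure_compl] at hxE
    exact hxE (interior_mono subset_closure hxK)
  · -- easy direction
    apply closure_minimal
    · intro z hz
      rw [LambdaSet, Set.mem_iUnion₂] at hz
      obtain ⟨y, -, hzy⟩ := hz
      rw [Set.mem_iInter₂]
      rintro E ⟨hEopen, hEabs⟩
      obtain ⟨n, hn⟩ := hEabs y
      have h1 : z ∈ closure ((fun m => f^[m] y) '' Set.Ici n) :=
        Set.mem_iInter.mp hzy n
      refine closure_mono ?_ h1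
      rintro w ⟨m, hm, rfl⟩
      exact hn m hm
    · exact isClosed_biInter fun E _ => isClosed_closure
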